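/- Let F be a perfect field of characteristic p > 0 and let φ ∈ F[U,V] be a homogeneous, square-free polynomial that is divisible by neither U nor V. Then every common divisor of φ and U·(∂φ/∂U) in F[U,V] is a unit. -/

import Mathlib

open MvPolynomial

section AuxNCF

variable {F : Type} [Field F]

lemma X_mul_pderiv_monomial (i : Fin 2) (m : Fin 2 →₀ ℕ) (c : F) :
    X i * pderiv i (monomial m c) = monomial m (c * m i) := by
  rw [pderiv_monomial]
  have hX : (X i : MvPolynomial (Fin 2) F) = monomial (Finsupp.single i 1) 1 := rfl
  rw [hX, monomial_mul, one_mul]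
  rcases Nat.eq_zero_or_pos (m i) with h | h
  · rw [h]; simp
  · have hm : (Finsupp.single i 1) + (m - Finsupp.single i 1) = m := by
      ext j
      by_cases hj : j = i
      · subst hj
        simp only [Finsupp.add_apply, Finsupp.tsub_apply, Finsupp.single_apply,
          if_pos, if_true]
        omega
      · simp [Finsupp.single_apply, Ne.symm hj]
    rw [hm]

lemma euler (φ : MvPolynomial (Fin 2) F) (D : ℕ) (hhom : φ.IsHomogeneous D) :
    X 0 * pderiv 0 φ + X 1 * pderiv 1 φ = C (D : F) * φ := by
  conv_lhs => rw [← support_sum_monomial_coeff φ]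
  conv_rhs => rw [← support_sum_monomial_coeff φ]
  rw [map_sum, map_sum, Finset.mul_sum, Finset.mul_sum, Finset.mul_sum,
    ← Finset.sum_add_distrib]
  refine Finset.sum_congr rfl fun m hm => ?_
  rw [_root_.X_mul_pderiv_monomial, _root_.X_mul_pderiv_monomial, C_mul_monomial, ← map_add]
  have hc : coeff m φ ≠ 0 := mem_support_iff.mp hm
  have hdeg : m 0 + m 1 = D := by
    have h1 := hhom hc
    rw [show (1 : Fin 2 → ℕ) = fun _ => 1 from rfl, ← Finsupp.degree_eq_weight_one] at h1
    have h2 : m.degree = ∑ j : Fin 2, m j :=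
      Finset.sum_subset (Finset.subset_univ _)
        (fun x _ hx => Finsupp.notMem_support_iff.mp hx)
    rw [h2, Fin.sum_univ_two] at h1
    exact h1
  congr 1
  rw [← hdeg]
  push_cast
  ring

lemma coeff_pderiv (i : Fin 2) (f : MvPolynomial (Fin 2) F) (m : Fin 2 →₀ ℕ) :
    coeff m (pderiv i f) = ((m i : F) + 1) * coeff (m + Finsupp.single i 1) f := by
  induction f using MvPolynomial.induction_on' with
  | add f g hf hg => simp only [map_add, coeff_add, hf, hg]; ring
  | monomial s c =>
    rw [pderiv_monomial, coeff_monomial, coeff_monomial]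
    rcases Nat.eq_zero_or_pos (s i) with h | h
    · have h1 : s - Finsupp.single i 1 = s := by
        ext j
        by_cases hj : j = i
        · subst hj; simp [Finsupp.single_apply, h]
        · simp [Finsupp.single_apply, Ne.symm hj]
      have h2 : s ≠ m + Finsupp.single i 1 := by
        intro he
        have := congrArg (fun g : Fin 2 →₀ ℕ => g i) he
        simp [Finsupp.single_apply] at this
        omega
      rw [h1, if_neg h2, mul_zero]
      split <;> simp [h]
    · have hiff : s - Finsupp.single i 1 = m ↔ s = m + Finsupp.single i 1 := by
        constructor
        · intro he
          ext j
          have := congrArg (fun g : Fin 2 →₀ ℕ => g j) he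
          by_cases hj : j = i
          · subst hj
            simp only [Finsupp.tsub_apply, Finsupp.single_apply, if_pos, if_true,
              Finsupp.add_apply] at this ⊢
            omega
          · simp only [Finsupp.tsub_apply, Finsupp.single_apply, Ne.symm hj, if_false,
              Finsupp.add_apply] at this ⊢
            omega
        · intro he
          subst he
          ext j
          by_cases hj : j = i
          · subst hj
            simp only [Finsupp.tsub_apply, Finsupp.single_apply, if_pos, if_true,
              Finsupp.add_apply]
            omega
          · simp [Finsupp.single_apply, Ne.symm hj]
      by_cases he : s - Finsupp.single i 1 = m
      · rw [if_pos he, if_pos (hiff.mp he)]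
        have hsi : s i = m i + 1 := by
          have := congrArg (fun g : Fin 2 →₀ ℕ => g i) (hiff.mp he)
          simpa [Finsupp.single_apply] using this
        rw [hsi]
        push_cast
        ring
      · rw [if_neg he, if_neg (fun hh => he (hiff.mpr hh)), mul_zero]

lemma degreeOf_pderiv_lt (i : Fin 2) (f : MvPolynomial (Fin 2) F)
    (h : pderiv i f ≠ 0) : degreeOf i (pderiv i f) < degreeOf i f := by
  have key : ∀ m ∈ (pderiv i f).support, m i + 1 ≤ degreeOf i f := by
    intro m hm
    have hc : coeff m (pderiv i f) ≠ 0 := mem_support_iff.mp hm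
    rw [_root_.coeff_pderiv] at hc
    have hc2 : coeff (m + Finsupp.single i 1) f ≠ 0 := fun h0 => hc (by rw [h0, mul_zero])
    have := monomial_le_degreeOf i (mem_support_iff.mpr hc2)
    simpa [Finsupp.single_apply] using this
  obtain ⟨m, hm⟩ := (support_nonempty (p := pderiv i f)).mpr h
  have h0 : 0 < degreeOf i f := lt_of_lt_of_le (Nat.succ_pos _) (key m hm)
  rw [degreeOf_lt_iff h0]
  intro n hn
  exact lt_of_lt_of_le (Nat.lt_succ_self _) (key n hn)

lemma natDegree_finSuccEquiv' (f : MvPolynomial (Fin 2) F) :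
    (finSuccEquiv F 1 f).natDegree = degreeOf 0 f := by
  by_cases hf : f = 0
  · simp [hf]
  have hne : (finSuccEquiv F 1 f) ≠ 0 := by
    rw [← map_zero (finSuccEquiv F 1)] at *
    exact fun h => hf ((finSuccEquiv F 1).injective h)
  rw [Polynomial.natDegree_eq_support_max' hne, degreeOf_eq_sup]
  rw [Finset.max'_eq_sup', Finset.sup'_eq_sup]
  rw [support_finSuccEquiv, Finset.sup_image]
  rfl

lemma degreeOf_zero_le_of_dvd {f g : MvPolynomial (Fin 2) F} (h : f ∣ g) (hg : g ≠ 0) :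
    degreeOf 0 f ≤ degreeOf 0 g := by
  rw [← natDegree_finSuccEquiv', ← natDegree_finSuccEquiv']
  refine Polynomial.natDegree_le_of_dvd (map_dvd (finSuccEquiv F 1) h) ?_
  rw [← map_zero (finSuccEquiv F 1)]
  exact fun hh => hg ((finSuccEquiv F 1).injective hh)

lemma degreeOf_rename_swap (j : Fin 2) (f : MvPolynomial (Fin 2) F) :
    degreeOf (Equiv.swap (0 : Fin 2) 1 j) (rename (Equiv.swap (0 : Fin 2) 1) f)
      = degreeOf j f := by
  classical
  rw [degreeOf_eq_sup, degreeOf_eq_sup,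
    support_rename_of_injective (Equiv.swap (0 : Fin 2) 1).injective, Finset.sup_image]
  refine Finset.sup_congr rfl fun m _ => ?_
  exact Finsupp.mapDomain_apply (Equiv.swap (0 : Fin 2) 1).injective m j

lemma degreeOf_le_of_dvd (i : Fin 2) {f g : MvPolynomial (Fin 2) F} (h : f ∣ g)
    (hg : g ≠ 0) : degreeOf i f ≤ degreeOf i g := by
  fin_cases i
  · exact degreeOf_zero_le_of_dvd h hg
  · have e := Equiv.swap (0 : Fin 2) 1
    have h1f := degreeOf_rename_swap (F := F) 1 f
    have h1g := degreeOf_rename_swap (F := F) 1 g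
    rw [Equiv.swap_apply_right] at h1f h1g
    rw [show (1 : Fin 2) = ⟨1, by omega⟩ from rfl] at h1f h1g
    rw [← h1f, ← h1g]
    refine degreeOf_zero_le_of_dvd (map_dvd (rename (Equiv.swap (0 : Fin 2) 1) : MvPolynomial (Fin 2) F →ₐ[F] _) h) ?_
    exact fun hh => hg ((rename_injective _ (Equiv.swap (0 : Fin 2) 1).injective) (by simpa using hh))

lemma prime_X' (i : Fin 2) : Prime (X i : MvPolynomial (Fin 2) F) := by
  have h0 : Prime (X (0 : Fin 2) : MvPolynomial (Fin 2) F) := by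
    refine (MulEquiv.prime_iff (finSuccEquiv F 1).toRingEquiv.toMulEquiv).mp ?_
    have : (finSuccEquiv F 1) (X (0 : Fin 2) : MvPolynomial (Fin 2) F) = Polynomial.X :=
      finSuccEquiv_X_zero
    rw [show ((finSuccEquiv F 1).toRingEquiv.toMulEquiv (X (0 : Fin 2) : MvPolynomial (Fin 2) F))
        = Polynomial.X from this]
    exact Polynomial.prime_X
  fin_cases i
  · exact h0
  · have h1 := (MulEquiv.prime_iff (renameEquiv F (Equiv.swap (0 : Fin 2) 1)).toRingEquiv.toMulEquiv).mpr h0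
    have h2 : ((renameEquiv F (Equiv.swap (0 : Fin 2) 1)).toRingEquiv.toMulEquiv
        (X (0 : Fin 2) : MvPolynomial (Fin 2) F)) = X 1 := by
      show (renameEquiv F (Equiv.swap (0 : Fin 2) 1)) (X 0) = X 1
      rw [renameEquiv_apply, rename_X, Equiv.swap_apply_left]
    rw [h2] at h1
    exact h1

end AuxNCF

/-- Let `F` be a perfect field of characteristic `p > 0` and `φ ∈ F[U,V]` a homogeneous,
square-free polynomial divisible by neither `U` nor `V`.  Then every common divisor of `φ`
and `U·(∂φ/∂U)` in `F[U,V]` is a unit. -/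
theorem no_common_factor_with_U_pderiv (F : Type) [Field F] [PerfectField F]
    (p : ℕ) [CharP F p] (hp : 0 < p)
    (φ : MvPolynomial (Fin 2) F) (D : ℕ) (hhom : φ.IsHomogeneous D)
    (hsf : Squarefree φ) (hU : ¬ (X 0 ∣ φ)) (hV : ¬ (X 1 ∣ φ)) :
    ∀ a : MvPolynomial (Fin 2) F,
      a ∣ φ → a ∣ X 0 * MvPolynomial.pderiv 0 φ → IsUnit a := by
  classical
  haveI : NeZero p := ⟨hp.ne'⟩
  haveI pp : Fact p.Prime := CharP.char_is_prime_of_pos F p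
  haveI : ExpChar F p := ExpChar.prime pp.out
  haveI : ExpChar (MvPolynomial (Fin 2) F) p := ExpChar.prime pp.out
  have hφ0 : φ ≠ 0 := fun h => hU (h ▸ dvd_zero _)
  intro a ha haU
  by_contra hna
  have ha0 : a ≠ 0 := by rintro rfl; exact hφ0 (zero_dvd_iff.mp ha)
  obtain ⟨q, hqirr, hqa⟩ := WfDvdMonoid.exists_irreducible_factor hna ha0
  have hq : Prime q := (UniqueFactorizationMonoid.irreducible_iff_prime).mp hqirr
  have hqφ : q ∣ φ := hqa.trans ha
  have hqU : q ∣ X 0 * pderiv 0 φ := hqa.trans haU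
  have hqX : ∀ i : Fin 2, ¬ q ∣ X i := by
    intro i hd
    obtain ⟨c, hc⟩ := hd
    have hcu : IsUnit c :=
      ((prime_X' i).irreducible.isUnit_or_isUnit hc).resolve_left hq.not_unit
    obtain ⟨u, rfl⟩ := hcu
    have hxq : X i ∣ q := ⟨(u⁻¹ : (MvPolynomial (Fin 2) F)ˣ), by
      rw [hc, mul_assoc, Units.mul_inv, mul_one]⟩
    have hXφ : X i ∣ φ := hxq.trans hqφ
    fin_cases i
    · exact hU hXφ
    · exact hV hXφ
  have hq0 : q ∣ pderiv 0 φ := (hq.2.2 _ _ hqU).resolve_left (hqX 0)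
  have heuler := euler φ D hhom
  have hq1 : q ∣ pderiv 1 φ := by
    have hdvd : q ∣ X 1 * pderiv 1 φ := by
      have he : X 1 * pderiv 1 φ = C (D : F) * φ - X 0 * pderiv 0 φ := by
        rw [← heuler]; ring
      rw [he]
      exact dvd_sub (hqφ.mul_left _) hqU
    exact (hq.2.2 _ _ hdvd).resolve_left (hqX 1)
  obtain ⟨ψ, hψ⟩ := hqφ
  have hqψ : ¬ q ∣ ψ := by
    rintro ⟨t, rfl⟩
    exact hq.not_unit (hsf q ⟨t, by rw [hψ]; ring⟩)
  have hkey : ∀ i : Fin 2, q ∣ pderiv i φ → pderiv i q = 0 := by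
    intro i hdvd
    have hder : pderiv i φ = pderiv i q * ψ + q * pderiv i ψ := by
      rw [hψ, pderiv_mul]
    have h2 : q ∣ pderiv i q * ψ := by
      have he : pderiv i q * ψ = pderiv i φ - q * pderiv i ψ := by rw [hder]; ring
      rw [he]; exact dvd_sub hdvd (Dvd.intro _ rfl)
    have h3 : q ∣ pderiv i q := (hq.2.2 _ _ h2).resolve_right hqψ
    by_contra hne
    exact absurd (degreeOf_le_of_dvd i h3 hne)
      (not_le.mpr (degreeOf_pderiv_lt i q hne))
  have hpd0 := hkey 0 hq0
  have hpd1 := hkey 1 hq1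
  have hexp : ∀ m ∈ q.support, ∀ i : Fin 2, p ∣ m i := by
    intro m hm i
    have hc : coeff m q ≠ 0 := mem_support_iff.mp hm
    rcases Nat.eq_zero_or_pos (m i) with h | h
    · rw [h]; exact dvd_zero p
    · have hsub : (m - Finsupp.single i 1) + Finsupp.single i 1 = m := by
        ext j
        by_cases hj : j = i
        · subst hj
          simp only [Finsupp.add_apply, Finsupp.tsub_apply, Finsupp.single_apply,
            if_pos, if_true]
          omega
        · simp [Finsupp.single_apply, Ne.symm hj]
      have hpc := coeff_pderiv i q (m - Finsupp.single i 1)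
      have hzero : pderiv i q = 0 := by fin_cases i; exacts [hpd0, hpd1]
      rw [hzero, coeff_zero, hsub] at hpc
      have h1 : (m - Finsupp.single i 1 : Fin 2 →₀ ℕ) i = m i - 1 := by
        simp [Finsupp.single_apply]
      have hmi : (((m - Finsupp.single i 1 : Fin 2 →₀ ℕ) i : ℕ) : F) + 1 = (m i : F) := by
        have h2 : (m i - 1) + 1 = m i := Nat.succ_pred_eq_of_pos h
        rw [h1, ← h2]
        push_cast
        ring
      rw [hmi] at hpc
      have hcast : (m i : F) = 0 := by
        rcases mul_eq_zero.mp hpc.symm with h' | h'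
        · exact h'
        · exact absurd h' hc
      exact (CharP.cast_eq_zero_iff F p (m i)).mp hcast
  let m2 : (Fin 2 →₀ ℕ) → (Fin 2 →₀ ℕ) := fun m => m.mapRange (· / p) (Nat.zero_div p)
  have hsmul : ∀ m ∈ q.support, p • (m2 m) = m := by
    intro m hm
    ext j
    have := hexp m hm j
    simp only [m2, Finsupp.smul_apply, Finsupp.mapRange_apply, smul_eq_mul]
    exact Nat.mul_div_cancel' this
  set r : MvPolynomial (Fin 2) F :=
    ∑ m ∈ q.support, monomial (m2 m) ((frobeniusEquiv F p).symm (coeff m q)) with hr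
  have hrp : r ^ p = q := by
    rw [hr, sum_pow_char]
    conv_rhs => rw [← support_sum_monomial_coeff q]
    refine Finset.sum_congr rfl fun m hm => ?_
    rw [monomial_pow, hsmul m hm, frobeniusEquiv_symm_pow_p]
  have hp1 : p - 1 + 1 = p := Nat.succ_pred_eq_of_pos hp
  have hfac : q = r ^ (p - 1) * r := by rw [← pow_succ, hp1, hrp]
  rcases hqirr.isUnit_or_isUnit hfac with hu | hu
  · have hdr : r ∣ r ^ (p - 1) :=
      dvd_pow_self r (by have := pp.out.one_lt; omega : p - 1 ≠ 0)
    exact hq.not_unit (by rw [← hrp]; exact (isUnit_of_dvd_unit hdr hu).pow p)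
  · exact hq.not_unit (by rw [← hrp]; exact hu.pow p)
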